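/- Let u > 0 and θ ∈ ℝ. Set w = √(1+u²), C = √( (u² + cos²(θ/2)) / (1+u²) ), S = sin(θ/2)/w, Cx = cos(θ/2)/C, and Sx = u·sin(θ/2)/(w·C). Then C² + S² = 1, Cx² + Sx² = 1, and in the real quaternions ℍ the identity ⟨cos(θ/2), sin(θ/2)/w, 0, u·sin(θ/2)/w⟩ = ⟨C, S·Cx, S·Sx, 0⟩ * ⟨Cx, 0, 0, Sx⟩ holds. (Equivalently: the rotation of ℝ³ by angle θ about the unit axis (cos α, 0, sin α), α = arctan u, is the composition of the rotation by angle η about the unit axis (Cx, Sx, 0) lying in the xy-plane with a rotation about the z-axis, where sin(η/2) = sin(θ/2)·cos α and cos(η/2) = √((u²+cos²(θ/2))/(1+u²)).) -/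

import Mathlib

open Real

/-- Quaternion decomposition of a bang-arc rotation of the Bloch sphere: the rotation by
angle `θ` about the tilted unit axis `(cos α, 0, sin α)` (with `α = arctan u`) factors as the
rotation by angle `η` about an axis in the `xy`-plane followed by a rotation about the
`z`-axis (proof of Proposition 6). -/
theorem bang_rotation_decomposition (u θ : ℝ) (hu : 0 < u)
    (w C S Cx Sx : ℝ)
    (hw : w = Real.sqrt (1 + u ^ 2))
    (hC : C = Real.sqrt ((u ^ 2 + Real.cos (θ / 2) ^ 2) / (1 + u ^ 2)))
    (hS : S = Real.sin (θ / 2) / w)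
    (hCx : Cx = Real.cos (θ / 2) / C)
    (hSx : Sx = u * Real.sin (θ / 2) / (w * C)) :
    C ^ 2 + S ^ 2 = 1 ∧ Cx ^ 2 + Sx ^ 2 = 1 ∧
      (⟨Real.cos (θ / 2), Real.sin (θ / 2) / w, 0, u * Real.sin (θ / 2) / w⟩ : Quaternion ℝ) =
        (⟨C, S * Cx, S * Sx, 0⟩ : Quaternion ℝ) * (⟨Cx, 0, 0, Sx⟩ : Quaternion ℝ) := by
  have h1 : (0:ℝ) < 1 + u ^ 2 := by positivity
  have hnum : (0:ℝ) < u ^ 2 + Real.cos (θ / 2) ^ 2 := by positivity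
  have hwpos : 0 < w := hw ▸ Real.sqrt_pos.mpr h1
  have hCpos : 0 < C := hC ▸ Real.sqrt_pos.mpr (by positivity)
  have hw2 : w ^ 2 = 1 + u ^ 2 := by
    rw [hw, Real.sq_sqrt h1.le]
  have hC2 : C ^ 2 = (u ^ 2 + Real.cos (θ / 2) ^ 2) / (1 + u ^ 2) := by
    rw [hC, Real.sq_sqrt (by positivity)]
  have hsc : Real.sin (θ / 2) ^ 2 + Real.cos (θ / 2) ^ 2 = 1 :=
    Real.sin_sq_add_cos_sq _
  have e1 : C ^ 2 + S ^ 2 = 1 := by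
    rw [hS, hC2, div_pow]
    field_simp
    nlinarith [hsc]
  have hC2' : C ^ 2 * (1 + u ^ 2) = u ^ 2 + Real.cos (θ / 2) ^ 2 := by
    rw [hC2]; field_simp
  have e2 : Cx ^ 2 + Sx ^ 2 = 1 := by
    rw [hCx, hSx]
    field_simp
    linear_combination (Real.cos (θ/2) ^ 2 - C ^ 2) * hw2 + u ^ 2 * hsc - hC2'
  refine ⟨e1, e2, ?_⟩
  ext <;> simp [Quaternion.re_mul, Quaternion.imI_mul, Quaternion.imJ_mul, Quaternion.imK_mul]
  · -- re
    rw [hCx]; field_simp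
  · rw [← hS]; linear_combination (-S) * e2
  · ring
  · rw [hSx]; field_simp
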